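/- Let m ∈ ℤ, Λ = l(l+1), l ≥ 2, and ω, ϖ, ν, λ : (0,∞) → ℝ with ϖ = Ω − ω, and suppose 1 − (m²/Λ) ω(r) ϖ(r) r² e^{−ν(r)} > 0 for all r > 0. Define p₁ = (im/Λ) r² e^{−λ} ϖ, p₃ = e^{ν−λ} + (imσ/Λ) ϖ r² e^{−λ}, p₄ = (r/2)(σ − imω), q₄ = (e^{ν}/(2r))(Λ−2) + (σ/2 − imω)σr. Then p₁ q₄ − p₃ p₄ = −(r/2) e^{ν−λ} [ (1 − (m²/Λ) ω ϖ r² e^{−ν}) σ − i m (Ω − (2/Λ) ϖ) ], and this vanishes for some r > 0 if and only if σ = i m (Ω − (2/Λ)ϖ(r)) / (1 − (m²/Λ) ω(r) ϖ(r) r² e^{−ν(r)}) for some r > 0; in particular p₁q₄ − p₃p₄ vanishes only for purely imaginary σ. -/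

import Mathlib

open Set

private lemma stmt11_aux (m : ℤ) (Λ Ω r a b w : ℝ) (σ : ℂ) (hΛc : (Λ:ℂ) ≠ 0) (hr0 : (r:ℂ) ≠ 0) :
    ((m : ℂ) * Complex.I / (Λ : ℂ)) * (r : ℂ) ^ 2 * ((Real.exp (-b) : ℝ) : ℂ) * ((Ω - w : ℝ) : ℂ) *
      (((Real.exp a / (2 * r) : ℝ) : ℂ) * ((Λ : ℂ) - 2)
        + (σ / 2 - (m : ℂ) * Complex.I * ((w : ℝ) : ℂ)) * σ * (r : ℂ))
    - (((Real.exp a * Real.exp (-b) : ℝ) : ℂ)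
        + ((m : ℂ) * Complex.I * σ / (Λ : ℂ)) * ((Ω - w : ℝ) : ℂ) * (r : ℂ) ^ 2 * ((Real.exp (-b) : ℝ) : ℂ))
      * (((r : ℂ) / 2) * (σ - (m : ℂ) * Complex.I * ((w : ℝ) : ℂ)))
    = -((r : ℂ) / 2) * ((Real.exp a * Real.exp (-b) : ℝ) : ℂ) *
        (((1 - ((m : ℝ) ^ 2 / Λ) * w * (Ω - w) * r ^ 2 * (Real.exp a)⁻¹ : ℝ) : ℂ) * σ
          - Complex.I * (m : ℂ) * (((Ω - (2 / Λ) * (Ω - w) : ℝ)) : ℂ)) := by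
  push_cast
  field_simp [Complex.exp_ne_zero]
  linear_combination (-(m:ℂ)^2*(r:ℂ)^2*((Ω:ℂ)-(w:ℂ))*σ*(w:ℂ)) * Complex.I_sq

private lemma stmt11_re (x A : ℝ) : (Complex.I * (x : ℂ) / (A : ℂ)).re = 0 := by
  simp [Complex.div_re]

/-- The leading coefficient `p₁q₄ − p₃p₄` of the decoupled resolvent equation equals
`−(r/2)e^{ν−λ}[(1 − (m²/Λ)ωϖr²e^{−ν})σ − im(Ω − (2/Λ)ϖ)]`, and it vanishes for some
`r > 0` iff `σ = im(Ω − (2/Λ)ϖ(r))/(1 − (m²/Λ)ω(r)ϖ(r)r²e^{−ν(r)})` for some `r > 0`;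
in particular it vanishes only for purely imaginary `σ`. -/
theorem stmt11 (m l : ℤ) (hl : 2 ≤ l) (Λ : ℝ) (hΛ : Λ = (l : ℝ) * ((l : ℝ) + 1))
    (Ω : ℝ) (hΩ : 0 < Ω) (ω ϖ ν lam : ℝ → ℝ)
    (hϖ : ∀ r : ℝ, ϖ r = Ω - ω r)
    (hpos : ∀ r > (0:ℝ), 0 < 1 - ((m : ℝ) ^ 2 / Λ) * ω r * ϖ r * r ^ 2 * Real.exp (-ν r))
    (σ : ℂ) (p₁ p₃ p₄ q₄ : ℝ → ℂ)
    (hp₁ : ∀ r : ℝ, p₁ r = ((m : ℂ) * Complex.I / (Λ : ℂ)) * (r : ℂ) ^ 2 *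
        ((Real.exp (-lam r) : ℝ) : ℂ) * ((ϖ r : ℝ) : ℂ))
    (hp₃ : ∀ r : ℝ, p₃ r = ((Real.exp (ν r - lam r) : ℝ) : ℂ)
        + ((m : ℂ) * Complex.I * σ / (Λ : ℂ)) * ((ϖ r : ℝ) : ℂ) * (r : ℂ) ^ 2 *
          ((Real.exp (-lam r) : ℝ) : ℂ))
    (hp₄ : ∀ r : ℝ, p₄ r = ((r : ℂ) / 2) * (σ - (m : ℂ) * Complex.I * ((ω r : ℝ) : ℂ)))
    (hq₄ : ∀ r : ℝ, q₄ r = ((Real.exp (ν r) / (2 * r) : ℝ) : ℂ) * ((Λ : ℂ) - 2)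
        + (σ / 2 - (m : ℂ) * Complex.I * ((ω r : ℝ) : ℂ)) * σ * (r : ℂ)) :
    (∀ r > (0:ℝ), p₁ r * q₄ r - p₃ r * p₄ r
        = -((r : ℂ) / 2) * ((Real.exp (ν r - lam r) : ℝ) : ℂ) *
          (((1 - ((m : ℝ) ^ 2 / Λ) * ω r * ϖ r * r ^ 2 * Real.exp (-ν r) : ℝ) : ℂ) * σ
            - Complex.I * (m : ℂ) * (((Ω - (2 / Λ) * ϖ r : ℝ)) : ℂ))) ∧
    ((∃ r > (0:ℝ), p₁ r * q₄ r - p₃ r * p₄ r = 0) ↔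
      ∃ r > (0:ℝ), σ = Complex.I * (m : ℂ) * (((Ω - (2 / Λ) * ϖ r : ℝ)) : ℂ) /
        (((1 - ((m : ℝ) ^ 2 / Λ) * ω r * ϖ r * r ^ 2 * Real.exp (-ν r) : ℝ)) : ℂ)) ∧
    ((∃ r > (0:ℝ), p₁ r * q₄ r - p₃ r * p₄ r = 0) → σ.re = 0) := by
  have hl2 : (2:ℝ) ≤ (l:ℝ) := by exact_mod_cast hl
  have hΛpos : 0 < Λ := by rw [hΛ]; nlinarith
  have hΛ0 : Λ ≠ 0 := ne_of_gt hΛpos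
  have hΛc : (Λ : ℂ) ≠ 0 := Complex.ofReal_ne_zero.mpr hΛ0
  have key : ∀ r > (0:ℝ), p₁ r * q₄ r - p₃ r * p₄ r
      = -((r : ℂ) / 2) * ((Real.exp (ν r - lam r) : ℝ) : ℂ) *
        (((1 - ((m : ℝ) ^ 2 / Λ) * ω r * ϖ r * r ^ 2 * Real.exp (-ν r) : ℝ) : ℂ) * σ
          - Complex.I * (m : ℂ) * (((Ω - (2 / Λ) * ϖ r : ℝ)) : ℂ)) := by
    intro r hr
    have hr0 : (r : ℂ) ≠ 0 := Complex.ofReal_ne_zero.mpr (ne_of_gt hr)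
    have e1 : Real.exp (ν r - lam r) = Real.exp (ν r) * Real.exp (-lam r) := by
      rw [← Real.exp_add]; ring_nf
    have e2 : Real.exp (-ν r) = (Real.exp (ν r))⁻¹ := Real.exp_neg _
    rw [hp₁ r, hp₃ r, hp₄ r, hq₄ r, hϖ r, e1, e2]
    exact stmt11_aux m Λ Ω r (ν r) (lam r) (ω r) σ hΛc hr0
  have factor_ne : ∀ r > (0:ℝ),
      -((r : ℂ) / 2) * ((Real.exp (ν r - lam r) : ℝ) : ℂ) ≠ 0 := by
    intro r hr
    have hr0 : (r : ℂ) ≠ 0 := Complex.ofReal_ne_zero.mpr (ne_of_gt hr)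
    exact mul_ne_zero (by simpa using hr0)
      (Complex.ofReal_ne_zero.mpr (Real.exp_pos _).ne')
  refine ⟨key, ?_, ?_⟩
  · constructor
    · rintro ⟨r, hr, h0⟩
      refine ⟨r, hr, ?_⟩
      rw [key r hr] at h0
      have hA : ((1 - ((m : ℝ) ^ 2 / Λ) * ω r * ϖ r * r ^ 2 * Real.exp (-ν r) : ℝ) : ℂ) ≠ 0 :=
        Complex.ofReal_ne_zero.mpr (ne_of_gt (hpos r hr))
      have h1 := (mul_eq_zero.mp h0).resolve_left (factor_ne r hr)
      rw [eq_div_iff hA]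
      linear_combination h1
    · rintro ⟨r, hr, hσ⟩
      refine ⟨r, hr, ?_⟩
      rw [key r hr]
      have hA : ((1 - ((m : ℝ) ^ 2 / Λ) * ω r * ϖ r * r ^ 2 * Real.exp (-ν r) : ℝ) : ℂ) ≠ 0 :=
        Complex.ofReal_ne_zero.mpr (ne_of_gt (hpos r hr))
      have h2 : ((1 - ((m : ℝ) ^ 2 / Λ) * ω r * ϖ r * r ^ 2 * Real.exp (-ν r) : ℝ) : ℂ) * σ
          - Complex.I * (m : ℂ) * (((Ω - (2 / Λ) * ϖ r : ℝ)) : ℂ) = 0 := by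
        rw [hσ, mul_div_cancel₀ _ hA, sub_self]
      rw [h2, mul_zero]
  · rintro ⟨r, hr, h0⟩
    rw [key r hr] at h0
    have hA : ((1 - ((m : ℝ) ^ 2 / Λ) * ω r * ϖ r * r ^ 2 * Real.exp (-ν r) : ℝ) : ℂ) ≠ 0 :=
      Complex.ofReal_ne_zero.mpr (ne_of_gt (hpos r hr))
    have h1 := (mul_eq_zero.mp h0).resolve_left (factor_ne r hr)
    have hσ : σ = Complex.I * (((m : ℝ) * (Ω - (2 / Λ) * ϖ r) : ℝ) : ℂ) /
        (((1 - ((m : ℝ) ^ 2 / Λ) * ω r * ϖ r * r ^ 2 * Real.exp (-ν r) : ℝ)) : ℂ) := by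
      rw [eq_div_iff hA]
      push_cast at h1 ⊢
      linear_combination h1
    rw [hσ]
    exact stmt11_re _ _
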